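/- For x̂ = Σ_{m,k} e_{m,k} and y = Σ_{m,k}(−1)^m e_{m,k}, the quadratic variation of x̂ + y along dyadic partitions satisfies, for every t ∈ [0,1], lim_n ⟨x̂+y⟩_t^{2n} = (4/3)t and lim_n ⟨x̂+y⟩_t^{2n+1} = (8/3)t. In particular, for t > 0 the limit of ⟨x̂+y⟩_t^n does not exist, even though ⟨x̂⟩_t = ⟨y⟩_t = t exist; hence the set of continuous functions admitting a quadratic variation along (𝕋_n) is not a vector space. -/

import Mathlib

noncomputable def e00 (t : ℝ) : ℝ := max (min t (1 - t)) 0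

noncomputable def e (m : ℕ) (k : ℤ) (t : ℝ) : ℝ :=
  (2 : ℝ) ^ (-(m : ℝ) / 2) * e00 ((2 : ℝ) ^ m * t - k)

noncomputable def xhat (t : ℝ) : ℝ :=
  ∑' m : ℕ, ∑ k ∈ Finset.range (2 ^ m), e m k t

noncomputable def yfun (t : ℝ) : ℝ :=
  ∑' m : ℕ, ∑ k ∈ Finset.range (2 ^ m), (-1 : ℝ) ^ m * e m k t

/-- Discrete quadratic variation of `z` up to time `t` along the `n`-th dyadic
partition (the point `s = 1` has successor `1` and contributes `0`). -/
noncomputable def qv (z : ℝ → ℝ) (n : ℕ) (t : ℝ) : ℝ :=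
  ∑ j ∈ Finset.range (2 ^ n),
    if (j : ℝ) * 2 ^ (-(n : ℤ)) ≤ t then
      (z ((j + 1 : ℝ) * 2 ^ (-(n : ℤ))) - z ((j : ℝ) * 2 ^ (-(n : ℤ)))) ^ 2
    else 0

lemma e00_of_nonpos {x : ℝ} (h : x ≤ 0) : e00 x = 0 := by
  unfold e00
  rw [max_eq_right]
  exact le_trans (min_le_left _ _) h

lemma e00_of_one_le {x : ℝ} (h : 1 ≤ x) : e00 x = 0 := by
  unfold e00
  rw [max_eq_right]
  exact le_trans (min_le_right _ _) (by linarith)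

lemma e00_int (z : ℤ) : e00 (z : ℝ) = 0 := by
  rcases le_or_gt z 0 with h | h
  · exact e00_of_nonpos (by exact_mod_cast h)
  · exact e00_of_one_le (by exact_mod_cast h)

lemma e00_ratio (r M : ℕ) (hr : r ≤ M) (hM : 0 < M) :
    e00 ((r : ℝ) / M) = (min r (M - r) : ℕ) / M := by
  have hM' : (0 : ℝ) < M := by exact_mod_cast hM
  unfold e00
  have h1 : 1 - (r : ℝ) / M = ((M - r : ℕ) : ℝ) / M := by
    rw [Nat.cast_sub hr]; field_simp
  rw [h1, min_div_div_right hM'.le, max_eq_left]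
  · push_cast [Nat.cast_min]; ring_nf
  · positivity


noncomputable def sgn (i j : ℕ) : ℝ := if j % 2^(i+1) < 2^i then 1 else -1


lemma sgn_mul_self (i j : ℕ) : sgn i j * sgn i j = 1 := by
  unfold sgn; split <;> norm_num

lemma abs_sgn (i j : ℕ) : |sgn i j| ≤ 1 := by
  unfold sgn; split <;> simp

lemma sgn_shift (i a s : ℕ) (ha : 2^(i+1) ∣ a) : sgn i (a + s) = sgn i s := by
  obtain ⟨u, rfl⟩ := ha
  unfold sgn
  rw [Nat.mul_add_mod]

lemma sgn_high_const (i i' q s : ℕ) (h : i < i') (hs : s < 2^(i+1)) :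
    sgn i' (q * 2^(i+1) + s) = sgn i' (q * 2^(i+1)) := by
  unfold sgn
  have hdvd : 2^(i+1) ∣ 2^(i'+1) := pow_dvd_pow 2 (by omega)
  -- c := (q * 2^(i+1)) % 2^(i'+1) is a multiple of 2^(i+1)
  have hc : 2^(i+1) ∣ (q * 2^(i+1)) % 2^(i'+1) :=
    Nat.dvd_mod_iff hdvd |>.mpr ⟨q, Nat.mul_comm ..⟩
  obtain ⟨u, hu⟩ := hc
  have hclt : (q * 2^(i+1)) % 2^(i'+1) < 2^(i'+1) := Nat.mod_lt _ (by positivity)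
  have hadd : (q * 2^(i+1) + s) % 2^(i'+1) = (q * 2^(i+1)) % 2^(i'+1) + s := by
    rw [Nat.add_mod, Nat.mod_eq_of_lt (a := s) (by
      calc s < 2^(i+1) := hs
      _ ≤ 2^(i'+1) := Nat.pow_le_pow_right (by norm_num) (by omega)),
      Nat.mod_eq_of_lt]
    -- need c + s < 2^(i'+1)
    obtain ⟨w, hw⟩ := hdvd
    have h2 : 2^(i+1) * u + 2^(i+1) ≤ 2^(i'+1) := by
      rw [hu, hw] at hclt
      have huw : u < w := lt_of_mul_lt_mul_left hclt (Nat.zero_le _)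
      calc 2^(i+1) * u + 2^(i+1) = 2^(i+1) * (u+1) := by ring
        _ ≤ 2^(i+1) * w := Nat.mul_le_mul_left _ (by omega)
        _ = 2^(i'+1) := hw.symm
    omega
  rw [hadd]
  -- threshold 2^i' is a multiple of 2^(i+1)
  obtain ⟨v, hv⟩ : 2^(i+1) ∣ 2^(i') := pow_dvd_pow 2 (by omega)
  rw [hu, hv]
  have h2pos : 0 < 2^(i+1) := by positivity
  by_cases huv : u < v
  · rw [if_pos, if_pos]
    · exact (Nat.mul_lt_mul_left h2pos).mpr huv
    · calc 2^(i+1) * u + s < 2^(i+1) * u + 2^(i+1) := by omega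
        _ = 2^(i+1) * (u+1) := by ring
        _ ≤ 2^(i+1) * v := Nat.mul_le_mul_left _ (by omega)
  · rw [if_neg, if_neg]
    · push_neg; exact Nat.mul_le_mul_left _ (by omega)
    · push_neg
      calc 2^(i+1) * v ≤ 2^(i+1) * u := Nat.mul_le_mul_left _ (by omega)
        _ ≤ 2^(i+1) * u + s := by omega


lemma sum_sgn_block (i : ℕ) : ∑ s ∈ Finset.range (2^(i+1)), sgn i s = 0 := by
  have h : ∀ s ∈ Finset.range (2^(i+1)), sgn i s = if s < 2^i then 1 else -1 := by
    intro s hs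
    rw [Finset.mem_range] at hs
    unfold sgn
    rw [Nat.mod_eq_of_lt hs]
  have h1 : (Finset.range (2^(i+1))).filter (fun s => s < 2^i) = Finset.range (2^i) := by
    ext s; simp [pow_succ]; omega
  have h2 : (Finset.range (2^(i+1))).filter (fun s => ¬ s < 2^i) = Finset.Ico (2^i) (2^(i+1)) := by
    ext s; simp [Finset.mem_Ico]; omega
  have h3 : 2^(i+1) - 2^i = 2^i := by have := pow_succ 2 i; omega
  rw [Finset.sum_congr rfl h, Finset.sum_ite, h1, h2, Finset.sum_const, Finset.sum_const,
    Nat.card_Ico, Finset.card_range, h3]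
  simp


lemma block_prod_zero (i i' q : ℕ) (h : i < i') :
    ∑ s ∈ Finset.range (2^(i+1)), sgn i (q * 2^(i+1) + s) * sgn i' (q * 2^(i+1) + s) = 0 := by
  have h1 : ∀ s ∈ Finset.range (2^(i+1)),
      sgn i (q * 2^(i+1) + s) * sgn i' (q * 2^(i+1) + s)
        = sgn i s * sgn i' (q * 2^(i+1)) := by
    intro s hs
    rw [Finset.mem_range] at hs
    rw [sgn_shift i _ s ⟨q, mul_comm ..⟩, sgn_high_const i i' q s h hs]
  rw [Finset.sum_congr rfl h1, ← Finset.sum_mul, sum_sgn_block, zero_mul]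

/-- partial sums of a `P`-block-cancelling, bounded-by-1 function are bounded by `P` -/
lemma partial_sum_bound (f : ℕ → ℝ) (P : ℕ) (hP : 0 < P)
    (hblock : ∀ q, ∑ s ∈ Finset.range P, f (q * P + s) = 0)
    (hbd : ∀ j, |f j| ≤ 1) (K : ℕ) :
    |∑ j ∈ Finset.range K, f j| ≤ P := by
  have hfull : ∀ Q, ∑ j ∈ Finset.range (Q * P), f j = 0 := by
    intro Q
    induction Q with
    | zero => simp
    | succ Q ih =>
      have : (Q+1) * P = Q * P + P := by ring
      rw [this, Finset.sum_range_add, ih, hblock, add_zero]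
  have hK : K = (K / P) * P + K % P := (Nat.div_add_mod' K P).symm
  calc |∑ j ∈ Finset.range K, f j|
      = |∑ j ∈ Finset.range ((K/P)*P), f j + ∑ s ∈ Finset.range (K % P), f ((K/P)*P + s)| := by
        rw [← Finset.sum_range_add, ← hK]
    _ = |∑ s ∈ Finset.range (K % P), f ((K/P)*P + s)| := by rw [hfull, zero_add]
    _ ≤ ∑ s ∈ Finset.range (K % P), |f ((K/P)*P + s)| := Finset.abs_sum_le_sum_abs _ _
    _ ≤ ∑ s ∈ Finset.range (K % P), 1 := Finset.sum_le_sum (fun s _ => hbd _)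
    _ = (K % P : ℕ) := by simp
    _ ≤ P := by exact_mod_cast (Nat.mod_lt K hP).le

lemma cross_bound (i i' : ℕ) (h : i ≠ i') (K : ℕ) :
    |∑ j ∈ Finset.range K, sgn i j * sgn i' j| ≤ 2^(min i i' + 1) := by
  rcases lt_or_gt_of_ne h with hlt | hlt
  · rw [min_eq_left hlt.le]
    exact_mod_cast partial_sum_bound (fun j => sgn i j * sgn i' j) (2^(i+1)) (by positivity)
      (fun q => block_prod_zero i i' q hlt)
      (fun j => by
        rw [abs_mul]
        calc |sgn i j| * |sgn i' j| ≤ 1 * 1 := by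
              apply mul_le_mul (by unfold sgn; split <;> simp) (by unfold sgn; split <;> simp)
                (abs_nonneg _) zero_le_one
          _ = 1 := by ring) K
  · rw [min_eq_right hlt.le]
    have hcomm : ∀ j, sgn i j * sgn i' j = sgn i' j * sgn i j := fun j => mul_comm _ _
    simp_rw [hcomm]
    exact_mod_cast partial_sum_bound (fun j => sgn i' j * sgn i j) (2^(i'+1)) (by positivity)
      (fun q => block_prod_zero i' i q hlt)
      (fun j => by
        rw [abs_mul]
        calc |sgn i' j| * |sgn i j| ≤ 1 * 1 := by
              apply mul_le_mul (by unfold sgn; split <;> simp) (by unfold sgn; split <;> simp)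
                (abs_nonneg _) zero_le_one
          _ = 1 := by ring) K


lemma key (n K : ℕ) (a : ℕ → ℝ) :
    |(∑ j ∈ Finset.range K, (∑ m ∈ Finset.range n, a m * sgn (n-1-m) j)^2)
      - K * ∑ m ∈ Finset.range n, (a m)^2|
    ≤ ∑ m ∈ Finset.range n, ∑ m' ∈ Finset.range n,
        (if m = m' then 0 else |a m| * |a m'| * 2^(min (n-1-m) (n-1-m') + 1)) := by
  set S : ℕ → ℕ → ℝ := fun m m' => ∑ j ∈ Finset.range K, sgn (n-1-m) j * sgn (n-1-m') j with hS
  have hSdiag : ∀ m, S m m = K := by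
    intro m
    simp only [hS, sgn_mul_self]
    simp
  have expand : (∑ j ∈ Finset.range K, (∑ m ∈ Finset.range n, a m * sgn (n-1-m) j)^2)
      = ∑ m ∈ Finset.range n, ∑ m' ∈ Finset.range n, a m * a m' * S m m' := by
    have h1 : ∀ j, (∑ m ∈ Finset.range n, a m * sgn (n-1-m) j)^2
        = ∑ m ∈ Finset.range n, ∑ m' ∈ Finset.range n,
            a m * a m' * (sgn (n-1-m) j * sgn (n-1-m') j) := by
      intro j
      rw [sq, Finset.sum_mul_sum]
      apply Finset.sum_congr rfl; intro m _
      apply Finset.sum_congr rfl; intro m' _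
      ring
    simp_rw [h1]
    rw [Finset.sum_comm]
    apply Finset.sum_congr rfl; intro m _
    rw [Finset.sum_comm]
    apply Finset.sum_congr rfl; intro m' _
    rw [hS, Finset.mul_sum]
  have splitpt : ∀ m m', a m * a m' * S m m'
      = (if m = m' then (a m)^2 * K else 0) + (if m = m' then 0 else a m * a m' * S m m') := by
    intro m m'
    by_cases h : m = m'
    · subst h; simp [hSdiag]; exact Or.inl (by ring)
    · simp only [if_neg h, zero_add]
  have hdiagsum : ∑ m ∈ Finset.range n, ∑ m' ∈ Finset.range n,
      (if m = m' then (a m)^2 * K else 0) = K * ∑ m ∈ Finset.range n, (a m)^2 := by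
    rw [Finset.mul_sum]
    apply Finset.sum_congr rfl; intro m hm
    rw [Finset.sum_ite_eq (Finset.range n) m (fun _ => (a m)^2 * (K:ℝ)), if_pos hm]
    ring
  have expand2 : ∑ m ∈ Finset.range n, ∑ m' ∈ Finset.range n, a m * a m' * S m m'
      = (K : ℝ) * ∑ m ∈ Finset.range n, (a m)^2
        + ∑ m ∈ Finset.range n, ∑ m' ∈ Finset.range n,
            (if m = m' then 0 else a m * a m' * S m m') := by
    rw [← hdiagsum, ← Finset.sum_add_distrib]
    apply Finset.sum_congr rfl; intro m _
    rw [← Finset.sum_add_distrib]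
    exact Finset.sum_congr rfl (fun m' _ => splitpt m m')
  rw [expand, expand2, add_sub_cancel_left]
  calc |∑ m ∈ Finset.range n, ∑ m' ∈ Finset.range n,
          (if m = m' then 0 else a m * a m' * S m m')|
      ≤ ∑ m ∈ Finset.range n, |∑ m' ∈ Finset.range n,
          (if m = m' then 0 else a m * a m' * S m m')| := Finset.abs_sum_le_sum_abs _ _
    _ ≤ ∑ m ∈ Finset.range n, ∑ m' ∈ Finset.range n,
          |if m = m' then 0 else a m * a m' * S m m'| :=
        Finset.sum_le_sum (fun m _ => Finset.abs_sum_le_sum_abs _ _)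
    _ ≤ _ := by
        apply Finset.sum_le_sum; intro m hm
        apply Finset.sum_le_sum; intro m' hm'
        by_cases h : m = m'
        · simp [h]
        · rw [if_neg h, if_neg h, abs_mul, abs_mul]
          have hne : n - 1 - m ≠ n - 1 - m' := by
            rw [Finset.mem_range] at hm hm'
            omega
          exact mul_le_mul_of_nonneg_left (cross_bound _ _ hne K)
            (by positivity)


def V (m n j : ℕ) : ℕ := min (j % 2^(n-m)) (2^(n-m) - j % 2^(n-m))


lemma level_eval (m n j : ℕ) (hmn : m < n) (hj : j ≤ 2^n) :
    ∑ k ∈ Finset.range (2^m), e00 ((j:ℝ)/((2^(n-m) : ℕ) : ℝ) - (k : ℕ)) =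
      (V m n j : ℝ) / ((2^(n-m) : ℕ) : ℝ) := by
  set M : ℕ := 2^(n-m) with hM
  have hMpos : 0 < M := Nat.pow_pos (by norm_num)
  have hMR : (0:ℝ) < (M:ℝ) := by exact_mod_cast hMpos
  set q : ℕ := j / M with hq
  set r : ℕ := j % M with hr
  have hrM : r < M := Nat.mod_lt _ hMpos
  have hjqr : q * M + r = j := Nat.div_add_mod' j M
  have hqMj : q * M ≤ j := Nat.le.intro hjqr
  have harg : ∀ k : ℕ, (j:ℝ)/(M:ℝ) - (k:ℕ) = (((j:ℤ) - (k:ℤ)*(M:ℤ) : ℤ) : ℝ) / (M:ℝ) := by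
    intro k
    push_cast
    field_simp
  have hzero : ∀ k ∈ Finset.range (2^m), k ≠ q →
      e00 ((j:ℝ)/(M:ℝ) - (k:ℕ)) = 0 := by
    intro k _ hk
    rw [harg]
    rcases lt_or_gt_of_ne hk with hlt | hgt
    · apply e00_of_one_le
      rw [le_div_iff₀ hMR, one_mul]
      have h1 : (k+1) * M ≤ j := le_trans (Nat.mul_le_mul_right M (by omega)) hqMj
      have h2 : ((k:ℤ)+1) * (M:ℤ) ≤ (j:ℤ) := by exact_mod_cast h1
      have h3 : (M:ℤ) ≤ (j:ℤ) - (k:ℤ)*(M:ℤ) := by linarith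
      exact_mod_cast h3
    · apply e00_of_nonpos
      apply div_nonpos_of_nonpos_of_nonneg _ hMR.le
      have h1 : (q+1) * M ≤ k * M := Nat.mul_le_mul_right M (by omega)
      have h2 : ((q:ℤ)+1) * (M:ℤ) ≤ (k:ℤ)*(M:ℤ) := by exact_mod_cast h1
      have h3 : ((q:ℤ)*M + r : ℤ) = (j:ℤ) := by exact_mod_cast hjqr
      have h4 : (j:ℤ) - (k:ℤ)*M ≤ 0 := by
        have : (r:ℤ) < M := by exact_mod_cast hrM
        linarith
      exact_mod_cast h4
  have hfq : e00 ((j:ℝ)/(M:ℝ) - (q:ℕ)) = (min r (M - r) : ℕ) / (M:ℝ) := by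
    rw [harg]
    have h3 : ((q:ℤ)*M + r : ℤ) = (j:ℤ) := by exact_mod_cast hjqr
    have h5 : (j:ℤ) - (q:ℤ)*M = (r:ℤ) := by linarith
    rw [h5, Int.cast_natCast]
    exact e00_ratio r M hrM.le hMpos
  rw [Finset.sum_eq_single q hzero]
  · rw [hfq]; rfl
  · intro hq'
    rw [hfq]
    rw [Finset.mem_range] at hq'
    push_neg at hq'
    have h2n : 2^m * M = 2^n := by
      rw [hM, ← pow_add]
      congr 1
      omega
    have hj2 : j = 2^n := by
      have h6 : 2^n ≤ q * M := by rw [← h2n]; exact Nat.mul_le_mul_right M hq'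
      exact le_antisymm hj (le_trans h6 hqMj)
    have hdvd : M ∣ 2^n := pow_dvd_pow 2 (by omega)
    have hr0 : r = 0 := by
      rw [hr, hj2]
      exact Nat.mod_eq_zero_of_dvd hdvd
    rw [hr0]
    simp


lemma levelsum_eval (m n j : ℕ) (hj : j ≤ 2^n) :
    ∑ k ∈ Finset.range (2^m), e m (k : ℕ) ((j:ℝ) * (2:ℝ)^(-(n:ℤ))) =
      if m < n then (2:ℝ)^(-(m:ℝ)/2) * ((V m n j : ℝ) / ((2^(n-m) : ℕ) : ℝ)) else 0 := by
  by_cases hmn : m < n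
  · rw [if_pos hmn]
    have harg : ∀ k : ℕ, (2:ℝ)^m * ((j:ℝ) * (2:ℝ)^(-(n:ℤ))) - ((k:ℤ):ℝ)
        = (j:ℝ)/((2^(n-m) : ℕ) : ℝ) - (k:ℕ) := by
      intro k
      have h1 : ((2^(n-m) : ℕ) : ℝ) = (2:ℝ)^((n-m : ℕ) : ℤ) := by push_cast; rfl
      have h2 : (2:ℝ)^(m:ℕ) = (2:ℝ)^((m:ℕ):ℤ) := (zpow_natCast 2 m).symm
      rw [h1, h2, Int.cast_natCast]
      have h3 : (2:ℝ)^((m:ℕ):ℤ) * (2:ℝ)^(-(n:ℤ)) = ((2:ℝ)^((n-m : ℕ) : ℤ))⁻¹ := by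
        rw [← zpow_add₀ (two_ne_zero), ← zpow_neg]
        congr 1
        omega
      rw [div_eq_mul_inv, ← h3]
      ring
    unfold e
    simp_rw [harg]
    rw [← Finset.mul_sum, level_eval m n j hmn hj]
  · rw [if_neg hmn]
    apply Finset.sum_eq_zero
    intro k _
    unfold e
    have harg : (2:ℝ)^m * ((j:ℝ) * (2:ℝ)^(-(n:ℤ))) - ((k:ℤ):ℝ)
        = (((j * 2^(m-n) : ℕ) : ℤ) - (k : ℤ) : ℤ) := by
      push_cast
      have h2 : (2:ℝ)^(m:ℕ) = (2:ℝ)^((m:ℕ):ℤ) := (zpow_natCast 2 m).symm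
      have h4 : (2:ℝ)^((m-n : ℕ)) = (2:ℝ)^((m-n:ℕ):ℤ) := (zpow_natCast 2 (m-n)).symm
      rw [h2, h4]
      have h3 : (2:ℝ)^((m:ℕ):ℤ) * (2:ℝ)^(-(n:ℤ)) = (2:ℝ)^((m-n : ℕ) : ℤ) := by
        rw [← zpow_add₀ (two_ne_zero)]
        congr 1
        omega
      rw [← h3]
      ring
    rw [harg, e00_int, mul_zero]

lemma xhat_dyadic (n j : ℕ) (hj : j ≤ 2^n) :
    xhat ((j:ℝ) * (2:ℝ)^(-(n:ℤ))) =
      ∑ m ∈ Finset.range n, (2:ℝ)^(-(m:ℝ)/2) * ((V m n j : ℝ) / ((2^(n-m) : ℕ) : ℝ)) := by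
  unfold xhat
  rw [tsum_eq_sum (s := Finset.range n) (fun m hm => by
    rw [levelsum_eval m n j hj, if_neg (by simpa using hm)])]
  apply Finset.sum_congr rfl
  intro m hm
  rw [levelsum_eval m n j hj, if_pos (Finset.mem_range.mp hm)]

lemma yfun_dyadic (n j : ℕ) (hj : j ≤ 2^n) :
    yfun ((j:ℝ) * (2:ℝ)^(-(n:ℤ))) =
      ∑ m ∈ Finset.range n, (-1:ℝ)^m * ((2:ℝ)^(-(m:ℝ)/2) * ((V m n j : ℝ) / ((2^(n-m) : ℕ) : ℝ))) := by
  unfold yfun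
  have hpull : ∀ m : ℕ, ∀ t : ℝ, ∑ k ∈ Finset.range (2^m), (-1:ℝ)^m * e m (k:ℕ) t
      = (-1:ℝ)^m * ∑ k ∈ Finset.range (2^m), e m (k:ℕ) t := by
    intro m t; rw [Finset.mul_sum]
  rw [tsum_eq_sum (s := Finset.range n) (fun m hm => by
    rw [hpull, levelsum_eval m n j hj, if_neg (by simpa using hm), mul_zero])]
  apply Finset.sum_congr rfl
  intro m hm
  rw [hpull, levelsum_eval m n j hj, if_pos (Finset.mem_range.mp hm)]


lemma g_diff (d j : ℕ) (hd : 1 ≤ d) :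
    ((min ((j+1) % 2^d) (2^d - (j+1) % 2^d) : ℕ) : ℤ)
      - ((min (j % 2^d) (2^d - j % 2^d) : ℕ) : ℤ)
    = if j % 2^d < 2^(d-1) then 1 else -1 := by
  have hM : 2^d = 2 * 2^(d-1) := by
    rw [← pow_succ']
    congr 1
    omega
  set A : ℕ := 2^(d-1) with hA
  have hA1 : 1 ≤ A := Nat.one_le_two_pow
  rw [hM]
  set r : ℕ := j % (2*A) with hr
  have hrlt : r < 2*A := Nat.mod_lt _ (by omega)
  have h1 : (j+1) % (2*A) = (r+1) % (2*A) := by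
    rw [Nat.add_mod, Nat.mod_eq_of_lt (show 1 < 2*A by omega)]
  by_cases hc : r + 1 < 2*A
  · have h2 : (r+1) % (2*A) = r+1 := Nat.mod_eq_of_lt hc
    rw [h1, h2]
    push_cast [Nat.cast_sub (le_of_lt hrlt), Nat.cast_sub (le_of_lt hc),
      Nat.cast_sub hc.le]
    split <;> push_cast <;> omega
  · have hre : r + 1 = 2*A := by omega
    have h2 : (r+1) % (2*A) = 0 := by rw [hre, Nat.mod_self]
    rw [h1, h2]
    split
    · omega
    · push_cast [Nat.cast_sub (le_of_lt hrlt)]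
      omega

lemma V_diff (m n j : ℕ) (hmn : m < n) :
    (V m n (j+1) : ℝ) - (V m n j : ℝ) = sgn (n-1-m) j := by
  have hd : 1 ≤ n - m := by omega
  have hi1 : n - 1 - m + 1 = n - m := by omega
  have hi2 : n - m - 1 = n - 1 - m := by omega
  have hint := g_diff (n-m) j hd
  rw [hi2] at hint
  unfold sgn V
  rw [hi1]
  by_cases hcond : j % 2^(n-m) < 2^(n-1-m)
  · rw [if_pos hcond]
    rw [if_pos hcond] at hint
    exact_mod_cast congrArg (Int.cast : ℤ → ℝ) hint
  · rw [if_neg hcond]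
    rw [if_neg hcond] at hint
    exact_mod_cast congrArg (Int.cast : ℤ → ℝ) hint


lemma rpow_half_sq (m : ℕ) : ((2:ℝ)^(-(m:ℝ)/2))^2 = ((2:ℝ)^m)⁻¹ := by
  rw [← Real.rpow_natCast ((2:ℝ)^(-(m:ℝ)/2)) 2, ← Real.rpow_mul (by norm_num)]
  rw [show -(m:ℝ)/2 * (2:ℕ) = -(m:ℝ) by push_cast; ring]
  rw [Real.rpow_neg (by norm_num), Real.rpow_natCast]

lemma offbound (n m m' : ℕ) (hm : m < n) (hm' : m' < n) (cm cm' : ℝ)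
    (hc : |cm| ≤ 2) (hc' : |cm'| ≤ 2) :
    |cm * (2:ℝ)^(-(m:ℝ)/2) / ((2^(n-m) : ℕ):ℝ)| * |cm' * (2:ℝ)^(-(m':ℝ)/2) / ((2^(n-m'):ℕ):ℝ)|
      * 2^(min (n-1-m) (n-1-m') + 1) ≤ 4 / 2^n := by
  have h2 : ∀ k : ℕ, ((2^k : ℕ):ℝ) = (2:ℝ)^(k:ℝ) := by
    intro k; rw [Real.rpow_natCast]; push_cast; ring
  have habs : ∀ (cc : ℝ) (mm : ℕ), |cc| ≤ 2 → |cc * (2:ℝ)^(-(mm:ℝ)/2) / ((2^(n-mm) : ℕ):ℝ)|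
      ≤ 2 * (2:ℝ)^(-(mm:ℝ)/2 - ((n-mm : ℕ):ℝ)) := by
    intro cc mm hcc
    rw [abs_div, abs_mul, abs_of_pos (Real.rpow_pos_of_pos two_pos _),
      abs_of_pos (by positivity : (0:ℝ) < ((2^(n-mm) : ℕ):ℝ)), h2,
      Real.rpow_sub (by norm_num), div_eq_mul_inv]
    rw [mul_assoc]
    apply mul_le_mul_of_nonneg_right hcc
    positivity
  have hmono := mul_le_mul (habs cm m hc) (habs cm' m' hc') (abs_nonneg _) (by positivity)
  calc |cm * (2:ℝ)^(-(m:ℝ)/2) / ((2^(n-m) : ℕ):ℝ)| * |cm' * (2:ℝ)^(-(m':ℝ)/2) / ((2^(n-m'):ℕ):ℝ)|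
        * 2^(min (n-1-m) (n-1-m') + 1)
      ≤ (2 * (2:ℝ)^(-(m:ℝ)/2 - ((n-m : ℕ):ℝ))) * (2 * (2:ℝ)^(-(m':ℝ)/2 - ((n-m' : ℕ):ℝ)))
        * 2^(min (n-1-m) (n-1-m') + 1) := by
        apply mul_le_mul_of_nonneg_right hmono (by positivity)
    _ = 4 * (2:ℝ)^(-(m:ℝ)/2 - ((n-m : ℕ):ℝ) + (-(m':ℝ)/2 - ((n-m' : ℕ):ℝ))
          + ((min (n-1-m) (n-1-m') + 1 : ℕ):ℝ)) := by
        rw [Real.rpow_add (by norm_num), Real.rpow_add (by norm_num)]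
        rw [show ((2:ℝ)^(min (n-1-m) (n-1-m') + 1)) = (2:ℝ)^((min (n-1-m) (n-1-m') + 1 : ℕ):ℝ) from
          (Real.rpow_natCast 2 _).symm]
        ring
    _ ≤ 4 * (2:ℝ)^(-(n:ℝ)) := by
        apply mul_le_mul_of_nonneg_left _ (by norm_num)
        apply Real.rpow_le_rpow_of_exponent_le (by norm_num)
        have e1 : ((n-m : ℕ):ℝ) = (n:ℝ) - m := by
          rw [Nat.cast_sub hm.le]
        have e2 : ((n-m' : ℕ):ℝ) = (n:ℝ) - m' := by
          rw [Nat.cast_sub hm'.le]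
        rcases le_total m m' with hmm | hmm
        · have e3 : ((min (n-1-m) (n-1-m') + 1 : ℕ):ℝ) = (n:ℝ) - m' := by
            have : min (n-1-m) (n-1-m') + 1 = n - m' := by omega
            rw [this, Nat.cast_sub hm'.le]
          rw [e1, e2, e3]
          have : (m:ℝ) ≤ m' := by exact_mod_cast hmm
          linarith
        · have e3 : ((min (n-1-m) (n-1-m') + 1 : ℕ):ℝ) = (n:ℝ) - m := by
            have : min (n-1-m) (n-1-m') + 1 = n - m := by omega
            rw [this, Nat.cast_sub hm.le]
          rw [e1, e2, e3]
          have : (m':ℝ) ≤ m := by exact_mod_cast hmm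
          linarith
    _ = 4 / 2^n := by
        rw [Real.rpow_neg (by norm_num), Real.rpow_natCast, div_eq_mul_inv]


lemma qv_eq (z : ℝ → ℝ) (n : ℕ) (t : ℝ) (ht : 0 ≤ t) :
    qv z n t = ∑ j ∈ Finset.range (min (⌊t * 2^n⌋₊ + 1) (2^n)),
      (z (((j:ℝ)+1) * (2:ℝ)^(-(n:ℤ))) - z ((j:ℝ) * (2:ℝ)^(-(n:ℤ))))^2 := by
  unfold qv
  have hcond : ∀ j : ℕ, ((j : ℝ) * (2:ℝ)^(-(n:ℤ)) ≤ t) ↔ (j < ⌊t * 2^n⌋₊ + 1) := by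
    intro j
    have h2 : (0:ℝ) < (2:ℝ)^(-(n:ℤ)) := by positivity
    rw [Nat.lt_succ_iff, Nat.le_floor_iff (by positivity)]
    constructor
    · intro h
      calc (j:ℝ) = (j:ℝ) * (2:ℝ)^(-(n:ℤ)) * 2^n := by
            rw [mul_assoc]
            rw [show ((2:ℝ)^(-(n:ℤ)) * 2^n) = 1 by
              rw [zpow_neg, inv_mul_eq_div, div_eq_one_iff_eq (by positivity)]
              exact (zpow_natCast 2 n).symm]
            ring
        _ ≤ t * 2^n := by
            apply mul_le_mul_of_nonneg_right h (by positivity)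
    · intro h
      calc (j:ℝ) * (2:ℝ)^(-(n:ℤ)) ≤ t * 2^n * (2:ℝ)^(-(n:ℤ)) := by
            apply mul_le_mul_of_nonneg_right h h2.le
        _ = t := by
            rw [mul_assoc]
            rw [show ((2:ℝ)^(n:ℕ) * (2:ℝ)^(-(n:ℤ))) = 1 by
              rw [zpow_neg, mul_inv_eq_one₀ (by positivity)]
              exact (zpow_natCast 2 n).symm]
            ring
  have hch : ∀ j ∈ Finset.range (2^n),
      (if (j : ℝ) * 2 ^ (-(n : ℤ)) ≤ t then
        (z (((j:ℝ) + 1) * 2 ^ (-(n : ℤ))) - z ((j : ℝ) * 2 ^ (-(n : ℤ)))) ^ 2 else 0)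
      = (if j < ⌊t * 2^n⌋₊ + 1 then
        (z (((j:ℝ) + 1) * 2 ^ (-(n : ℤ))) - z ((j : ℝ) * 2 ^ (-(n : ℤ)))) ^ 2 else 0) := by
    intro j _
    rw [if_congr (hcond j) rfl rfl]
  rw [Finset.sum_congr rfl hch, Finset.sum_ite, Finset.sum_const_zero, add_zero]
  congr 1
  ext s
  simp only [Finset.mem_filter, Finset.mem_range, Finset.mem_range]
  omega


lemma master (c : ℕ → ℝ) (hc : ∀ m, |c m| ≤ 2) (z : ℝ → ℝ)
    (hz : ∀ n j : ℕ, j ≤ 2^n → z ((j:ℝ) * (2:ℝ)^(-(n:ℤ)))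
      = ∑ m ∈ Finset.range n, c m * ((2:ℝ)^(-(m:ℝ)/2) * ((V m n j : ℝ) / ((2^(n-m):ℕ):ℝ))))
    (t : ℝ) (ht0 : 0 ≤ t) (ht1 : t ≤ 1) (n : ℕ) :
    |qv z n t - t * (∑ m ∈ Finset.range n, (c m)^2 * 2^m) / 2^n| ≤ (4*(n:ℝ)^2 + 6) / 2^n := by
  set K : ℕ := min (⌊t * 2^n⌋₊ + 1) (2^n) with hK
  set a : ℕ → ℝ := fun m => c m * (2:ℝ)^(-(m:ℝ)/2) / ((2^(n-m) : ℕ):ℝ) with ha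
  set G : ℝ := ∑ m ∈ Finset.range n, (c m)^2 * 2^m with hG
  have hKle : K ≤ 2^n := min_le_right _ _
  -- increments
  have hincr : ∀ j ∈ Finset.range K,
      (z (((j:ℝ)+1) * (2:ℝ)^(-(n:ℤ))) - z ((j:ℝ) * (2:ℝ)^(-(n:ℤ))))^2
      = (∑ m ∈ Finset.range n, a m * sgn (n-1-m) j)^2 := by
    intro j hj
    rw [Finset.mem_range] at hj
    have hj1 : j + 1 ≤ 2^n := by omega
    have hcast : ((j:ℝ)+1) = (((j+1 : ℕ)):ℝ) := by push_cast; ring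
    congr 1
    rw [hcast, hz n (j+1) hj1, hz n j (by omega), ← Finset.sum_sub_distrib]
    apply Finset.sum_congr rfl
    intro m hm
    rw [Finset.mem_range] at hm
    rw [ha]
    simp only
    rw [← V_diff m n j hm]
    field_simp
  -- sum of squares of coefficients
  have hasq : ∑ m ∈ Finset.range n, (a m)^2 = G / 4^n := by
    rw [hG, Finset.sum_div]
    apply Finset.sum_congr rfl
    intro m hm
    rw [Finset.mem_range] at hm
    rw [ha]
    simp only
    rw [div_pow, mul_pow, rpow_half_sq]
    push_cast
    have hpow : ((2:ℝ)^(n-m))^2 * (2:ℝ)^m * (2:ℝ)^m = (4:ℝ)^n := by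
      rw [← pow_mul, ← pow_add, ← pow_add, show (4:ℝ) = 2^2 by norm_num, ← pow_mul]
      congr 1
      omega
    have h1 : ((2:ℝ)^(n-m)) ≠ 0 := by positivity
    have h2 : (2:ℝ)^m ≠ 0 := by positivity
    field_simp
    linear_combination -(c m)^2 * hpow
  -- main estimate via key
  have hkey := key n K a
  have hoffsum : ∑ m ∈ Finset.range n, ∑ m' ∈ Finset.range n,
      (if m = m' then 0 else |a m| * |a m'| * 2^(min (n-1-m) (n-1-m') + 1))
      ≤ (n:ℝ)^2 * (4 / 2^n) := by
    calc ∑ m ∈ Finset.range n, ∑ m' ∈ Finset.range n,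
        (if m = m' then 0 else |a m| * |a m'| * 2^(min (n-1-m) (n-1-m') + 1))
        ≤ ∑ m ∈ Finset.range n, ∑ m' ∈ Finset.range n, (4 / 2^n : ℝ) := by
          apply Finset.sum_le_sum; intro m hm
          apply Finset.sum_le_sum; intro m' hm'
          rw [Finset.mem_range] at hm hm'
          by_cases h : m = m'
          · rw [if_pos h]; positivity
          · rw [if_neg h]
            exact offbound n m m' hm hm' (c m) (c m') (hc m) (hc m')
      _ = (n:ℝ)^2 * (4/2^n) := by
          simp only [Finset.sum_const, Finset.card_range, nsmul_eq_mul]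
          ring
  -- bound |K - t*2^n| ≤ 1
  have hKbound : |(K:ℝ) - t * 2^n| ≤ 1 := by
    have hfl : (⌊t * 2^n⌋₊ : ℝ) ≤ t * 2^n := Nat.floor_le (by positivity)
    have hfu : t * 2^n < (⌊t * 2^n⌋₊ : ℝ) + 1 := Nat.lt_floor_add_one _
    rw [abs_le]
    constructor
    · -- t*2^n - 1 ≤ K
      rcases min_cases (⌊t * 2^n⌋₊ + 1) (2^n) with ⟨hmin, hle⟩ | ⟨hmin, hlt⟩
      · rw [hK, hmin]
        push_cast
        linarith
      · rw [hK, hmin]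
        have : t * 2^n ≤ 2^n := by
          apply mul_le_of_le_one_left (by positivity) ht1
        push_cast
        linarith
    · -- K ≤ t*2^n + 1
      have h7 : (K:ℝ) ≤ ((⌊t * 2^n⌋₊ + 1 : ℕ) : ℝ) := Nat.cast_le.mpr (min_le_left _ _)
      push_cast at h7
      linarith
  have hGnonneg : 0 ≤ G := by
    rw [hG]; apply Finset.sum_nonneg; intro m _; positivity
  have hGle : G ≤ 4 * 2^n := by
    rw [hG]
    calc ∑ m ∈ Finset.range n, (c m)^2 * 2^m
        ≤ ∑ m ∈ Finset.range n, 4 * 2^m := by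
          apply Finset.sum_le_sum; intro m _
          apply mul_le_mul_of_nonneg_right _ (by positivity)
          have := hc m
          have h1 : (c m)^2 = |c m|^2 := (sq_abs _).symm
          nlinarith [abs_nonneg (c m)]
      _ = 4 * (2^n - 1) := by
          rw [← Finset.mul_sum, geom_sum_eq (by norm_num)]
          norm_num
      _ ≤ 4 * 2^n := by nlinarith [pow_pos (show (0:ℝ) < 2 by norm_num) n]
  -- assemble
  rw [qv_eq z n t ht0, Finset.sum_congr rfl hincr]
  have step1 : |(∑ j ∈ Finset.range K, (∑ m ∈ Finset.range n, a m * sgn (n-1-m) j)^2)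
      - (K:ℝ) * (G / 4^n)| ≤ (n:ℝ)^2 * (4/2^n) := by
    rw [← hasq]
    exact le_trans hkey hoffsum
  have step2 : |(K:ℝ) * (G / 4^n) - t * G / 2^n| ≤ 4 / 2^n := by
    have h4 : (4:ℝ)^n = 2^n * 2^n := by rw [← pow_add, show (4:ℝ)=2^2 by norm_num, ← pow_mul]; congr 1; omega
    have : (K:ℝ) * (G / 4^n) - t * G / 2^n = ((K:ℝ) - t * 2^n) * (G / 4^n) := by
      rw [h4]; field_simp
    rw [this, abs_mul]
    have hpos : |G / 4^n| ≤ 4 / 2^n := by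
      rw [abs_of_nonneg (by positivity), h4, div_le_div_iff₀ (by positivity) (by positivity)]
      calc G * 2^n ≤ (4 * 2^n) * 2^n := by
            apply mul_le_mul_of_nonneg_right hGle (by positivity)
        _ = 4 * (2^n * 2^n) := by ring
    calc |(K:ℝ) - t * 2^n| * |G / 4^n| ≤ 1 * (4 / 2^n) := by
          apply mul_le_mul hKbound hpos (abs_nonneg _) (by norm_num)
      _ = 4 / 2^n := by ring
  calc |(∑ j ∈ Finset.range K, (∑ m ∈ Finset.range n, a m * sgn (n-1-m) j)^2) - t * G / 2^n|
      ≤ |(∑ j ∈ Finset.range K, (∑ m ∈ Finset.range n, a m * sgn (n-1-m) j)^2)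
          - (K:ℝ) * (G / 4^n)| + |(K:ℝ) * (G / 4^n) - t * G / 2^n| := abs_sub_le _ _ _
    _ ≤ (n:ℝ)^2 * (4/2^n) + 4 / 2^n := add_le_add step1 step2
    _ ≤ (4*(n:ℝ)^2 + 6) / 2^n := by
        have heq : (n:ℝ)^2 * (4/2^n) + 4/2^n = (4*(n:ℝ)^2+4)/2^n := by
          field_simp
        rw [heq]
        gcongr
        linarith


open Filter

lemma tend0 (A B : ℝ) : Tendsto (fun n : ℕ => (A*(n:ℝ)^2 + B)/2^n) atTop (nhds 0) := by
  have h1 : Tendsto (fun n : ℕ => (n:ℝ)^2/2^n) atTop (nhds 0) :=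
    tendsto_pow_const_div_const_pow_of_one_lt 2 (by norm_num)
  have h2 : Tendsto (fun n : ℕ => (n:ℝ)^0/2^n) atTop (nhds 0) :=
    tendsto_pow_const_div_const_pow_of_one_lt 0 (by norm_num)
  have heq : (fun n : ℕ => (A*(n:ℝ)^2 + B)/2^n)
      = fun n : ℕ => A*((n:ℝ)^2/2^n) + B*((n:ℝ)^0/2^n) := by
    funext n
    have : (2:ℝ)^n ≠ 0 := by positivity
    field_simp
  rw [heq]
  have := (h1.const_mul A).add (h2.const_mul B)
  simpa using this

lemma squeeze_abs (f : ℕ → ℝ) (L : ℝ) (g : ℕ → ℝ) (h : ∀ n, |f n - L| ≤ g n)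
    (hg : Tendsto g atTop (nhds 0)) : Tendsto f atTop (nhds L) := by
  rw [tendsto_iff_dist_tendsto_zero]
  apply squeeze_zero (fun n => dist_nonneg) _ hg
  intro n
  rw [Real.dist_eq]
  exact h n

lemma two_mul_tendsto : Tendsto (fun n : ℕ => 2*n) atTop atTop :=
  tendsto_atTop_mono (fun n => (by change n ≤ 2*n; omega)) tendsto_id

lemma two_mul_add_one_tendsto : Tendsto (fun n : ℕ => 2*n+1) atTop atTop :=
  tendsto_atTop_mono (fun n => (by change n ≤ 2*n+1; omega)) tendsto_id

lemma G2_closed (n : ℕ) : ∑ m ∈ Finset.range n, (1+(-1:ℝ)^m)^2 * 2^m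
    = if Even n then (4/3)*((2:ℝ)^n - 1) else (8*(2:ℝ)^n - 4)/3 := by
  induction n with
  | zero => simp
  | succ n ih =>
    rw [Finset.sum_range_succ, ih]
    by_cases h : Even n
    · rw [if_pos h, if_neg (by simp [Nat.even_add_one, h])]
      rw [h.neg_one_pow]
      rw [pow_succ]
      ring
    · rw [if_neg h, if_pos (by simp [Nat.even_add_one, h])]
      rw [(Nat.not_even_iff_odd.mp h).neg_one_pow]
      rw [pow_succ]
      ring

lemma G1_closed (n : ℕ) : ∑ m ∈ Finset.range n, ((1:ℝ))^2 * 2^m = (2:ℝ)^n - 1 := by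
  simp only [one_pow, one_mul]
  rw [geom_sum_eq (by norm_num)]
  norm_num

lemma Gy_closed (n : ℕ) : ∑ m ∈ Finset.range n, (((-1:ℝ))^m)^2 * 2^m = (2:ℝ)^n - 1 := by
  have : ∀ m, (((-1:ℝ))^m)^2 * 2^m = 2^m := by
    intro m
    rw [← pow_mul, mul_comm m 2, pow_mul]
    norm_num
  simp_rw [this]
  rw [geom_sum_eq (by norm_num)]
  norm_num

open Filter

lemma hz_xhat : ∀ n j : ℕ, j ≤ 2^n → xhat ((j:ℝ) * (2:ℝ)^(-(n:ℤ)))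
    = ∑ m ∈ Finset.range n, (fun _ : ℕ => (1:ℝ)) m
        * ((2:ℝ)^(-(m:ℝ)/2) * ((V m n j : ℝ) / ((2^(n-m):ℕ):ℝ))) := by
  intro n j hj
  rw [xhat_dyadic n j hj]
  apply Finset.sum_congr rfl
  intro m _
  rw [one_mul]

lemma hz_yfun : ∀ n j : ℕ, j ≤ 2^n → yfun ((j:ℝ) * (2:ℝ)^(-(n:ℤ)))
    = ∑ m ∈ Finset.range n, (fun m : ℕ => ((-1:ℝ))^m) m
        * ((2:ℝ)^(-(m:ℝ)/2) * ((V m n j : ℝ) / ((2^(n-m):ℕ):ℝ))) := by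
  intro n j hj
  exact yfun_dyadic n j hj

lemma hz_xy : ∀ n j : ℕ, j ≤ 2^n → (xhat + yfun) ((j:ℝ) * (2:ℝ)^(-(n:ℤ)))
    = ∑ m ∈ Finset.range n, (fun m : ℕ => 1 + ((-1:ℝ))^m) m
        * ((2:ℝ)^(-(m:ℝ)/2) * ((V m n j : ℝ) / ((2^(n-m):ℕ):ℝ))) := by
  intro n j hj
  rw [Pi.add_apply, xhat_dyadic n j hj, yfun_dyadic n j hj, ← Finset.sum_add_distrib]
  apply Finset.sum_congr rfl
  intro m _
  ring

lemma bound_x (t : ℝ) (ht0 : 0 ≤ t) (ht1 : t ≤ 1) (n : ℕ) :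
    |qv xhat n t - t| ≤ (4*(n:ℝ)^2 + 8) / 2^n := by
  have hm := master (fun _ => 1) (fun m => by norm_num) xhat hz_xhat t ht0 ht1 n
  rw [G1_closed n] at hm
  have h2n : (0:ℝ) < 2^n := by positivity
  have heq : |t * ((2:ℝ)^n - 1) / 2^n - t| ≤ 1/2^n := by
    have : t * ((2:ℝ)^n - 1) / 2^n - t = -(t/2^n) := by field_simp; ring
    rw [this, abs_neg, abs_of_nonneg (by positivity)]
    gcongr
  calc |qv xhat n t - t|
      ≤ |qv xhat n t - t * ((2:ℝ)^n - 1) / 2^n| + |t * ((2:ℝ)^n - 1) / 2^n - t| :=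
        abs_sub_le _ _ _
    _ ≤ (4*(n:ℝ)^2 + 6)/2^n + 1/2^n := add_le_add hm heq
    _ ≤ (4*(n:ℝ)^2 + 8)/2^n := by
        rw [← add_div, div_le_div_iff₀ h2n h2n]
        nlinarith

lemma bound_y (t : ℝ) (ht0 : 0 ≤ t) (ht1 : t ≤ 1) (n : ℕ) :
    |qv yfun n t - t| ≤ (4*(n:ℝ)^2 + 8) / 2^n := by
  have hm := master (fun m => ((-1:ℝ))^m) (fun m => by
    rw [abs_pow, abs_neg, abs_one, one_pow]; norm_num) yfun hz_yfun t ht0 ht1 n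
  rw [Gy_closed n] at hm
  have h2n : (0:ℝ) < 2^n := by positivity
  have heq : |t * ((2:ℝ)^n - 1) / 2^n - t| ≤ 1/2^n := by
    have : t * ((2:ℝ)^n - 1) / 2^n - t = -(t/2^n) := by field_simp; ring
    rw [this, abs_neg, abs_of_nonneg (by positivity)]
    gcongr
  calc |qv yfun n t - t|
      ≤ |qv yfun n t - t * ((2:ℝ)^n - 1) / 2^n| + |t * ((2:ℝ)^n - 1) / 2^n - t| :=
        abs_sub_le _ _ _
    _ ≤ (4*(n:ℝ)^2 + 6)/2^n + 1/2^n := add_le_add hm heq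
    _ ≤ (4*(n:ℝ)^2 + 8)/2^n := by
        rw [← add_div, div_le_div_iff₀ h2n h2n]
        nlinarith

lemma bound_xy (t : ℝ) (ht0 : 0 ≤ t) (ht1 : t ≤ 1) (n : ℕ) :
    |qv (xhat + yfun) n t - (if Even n then (4:ℝ)/3 else 8/3) * t| ≤ (4*(n:ℝ)^2 + 8) / 2^n := by
  have hm := master (fun m => 1 + ((-1:ℝ))^m) (fun m => by
    show |1 + (-1:ℝ)^m| ≤ 2
    rcases Nat.even_or_odd m with h | h
    · rw [h.neg_one_pow]; norm_num
    · rw [h.neg_one_pow]; norm_num) (xhat + yfun) hz_xy t ht0 ht1 n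
  rw [G2_closed n] at hm
  have h2n : (0:ℝ) < 2^n := by positivity
  have heq : |t * (if Even n then (4/3)*((2:ℝ)^n - 1) else (8*(2:ℝ)^n - 4)/3) / 2^n
      - (if Even n then (4:ℝ)/3 else 8/3) * t| ≤ 2/2^n := by
    by_cases h : Even n
    · rw [if_pos h, if_pos h]
      have : t * ((4/3)*((2:ℝ)^n - 1)) / 2^n - (4/3) * t = -((4/3) * t/2^n) := by
        field_simp; ring
      rw [this, abs_neg, abs_of_nonneg (by positivity)]
      rw [div_le_div_iff₀ h2n h2n]
      nlinarith
    · rw [if_neg h, if_neg h]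
      have : t * ((8*(2:ℝ)^n - 4)/3) / 2^n - (8/3) * t = -((4/3) * t/2^n) := by
        field_simp; ring
      rw [this, abs_neg, abs_of_nonneg (by positivity)]
      rw [div_le_div_iff₀ h2n h2n]
      nlinarith
  calc |qv (xhat + yfun) n t - (if Even n then (4:ℝ)/3 else 8/3) * t|
      ≤ |qv (xhat + yfun) n t
          - t * (if Even n then (4/3)*((2:ℝ)^n - 1) else (8*(2:ℝ)^n - 4)/3) / 2^n|
        + |t * (if Even n then (4/3)*((2:ℝ)^n - 1) else (8*(2:ℝ)^n - 4)/3) / 2^n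
          - (if Even n then (4:ℝ)/3 else 8/3) * t| := abs_sub_le _ _ _
    _ ≤ (4*(n:ℝ)^2 + 6)/2^n + 2/2^n := add_le_add hm heq
    _ = (4*(n:ℝ)^2 + 8)/2^n := by rw [← add_div]; ring_nf

lemma tendsto_xy_even (t : ℝ) (ht0 : 0 ≤ t) (ht1 : t ≤ 1) :
    Tendsto (fun n => qv (xhat + yfun) (2 * n) t) atTop (nhds ((4 / 3) * t)) := by
  apply squeeze_abs _ _ (fun n => (fun k : ℕ => (4*(k:ℝ)^2 + 8)/2^k) (2*n))
  · intro n
    have := bound_xy t ht0 ht1 (2*n)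
    rw [if_pos ⟨n, by ring⟩] at this
    exact this
  · exact (tend0 4 8).comp two_mul_tendsto

lemma tendsto_xy_odd (t : ℝ) (ht0 : 0 ≤ t) (ht1 : t ≤ 1) :
    Tendsto (fun n => qv (xhat + yfun) (2 * n + 1) t) atTop (nhds ((8 / 3) * t)) := by
  apply squeeze_abs _ _ (fun n => (fun k : ℕ => (4*(k:ℝ)^2 + 8)/2^k) (2*n+1))
  · intro n
    have := bound_xy t ht0 ht1 (2*n+1)
    rw [if_neg (by simp [Nat.even_add_one, parity_simps])] at this
    exact this
  · exact (tend0 4 8).comp two_mul_add_one_tendsto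

theorem stmt_19 :
    (∀ t ∈ Set.Icc (0 : ℝ) 1,
      Filter.Tendsto (fun n => qv (xhat + yfun) (2 * n) t) Filter.atTop
        (nhds ((4 / 3) * t)) ∧
      Filter.Tendsto (fun n => qv (xhat + yfun) (2 * n + 1) t) Filter.atTop
        (nhds ((8 / 3) * t))) ∧
    (∀ t ∈ Set.Icc (0 : ℝ) 1,
      Filter.Tendsto (fun n => qv xhat n t) Filter.atTop (nhds t) ∧
      Filter.Tendsto (fun n => qv yfun n t) Filter.atTop (nhds t)) ∧
    (∀ t ∈ Set.Ioc (0 : ℝ) 1,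
      ¬ ∃ L : ℝ, Filter.Tendsto (fun n => qv (xhat + yfun) n t) Filter.atTop (nhds L)) := by
  refine ⟨fun t ht => ⟨tendsto_xy_even t ht.1 ht.2, tendsto_xy_odd t ht.1 ht.2⟩,
    fun t ht => ⟨?_, ?_⟩, ?_⟩
  · exact squeeze_abs _ _ _ (bound_x t ht.1 ht.2) (tend0 4 8)
  · exact squeeze_abs _ _ _ (bound_y t ht.1 ht.2) (tend0 4 8)
  · rintro t ⟨ht0, ht1⟩ ⟨L, hL⟩
    have heven : Tendsto (fun n => qv (xhat + yfun) (2 * n) t) atTop (nhds L) :=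
      hL.comp two_mul_tendsto
    have hodd : Tendsto (fun n => qv (xhat + yfun) (2 * n + 1) t) atTop (nhds L) :=
      hL.comp two_mul_add_one_tendsto
    have h1 : L = (4/3) * t := tendsto_nhds_unique heven (tendsto_xy_even t ht0.le ht1)
    have h2 : L = (8/3) * t := tendsto_nhds_unique hodd (tendsto_xy_odd t ht0.le ht1)
    have : t = 0 := by linarith
    linarith
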